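/- Conversely to the previous statement: if S and C satisfy the system (∂/∂t + ∂/∂a)S = σ·N - (i+m0)·S + r·C and (∂/∂t + ∂/∂a)C = γ·N + i·S - (m1+r)·C with N = S + C > 0, then p = C/N satisfies (∂/∂a + ∂/∂t)p = (1-p)(i - p(m1-m0)) - r·p + γ(1-p) - p·σ; and any solution of the PDE arising this way with S ≥ 0 and C ≥ 0 satisfies 0 ≤ p(t,a) ≤ 1. -/

import Mathlib

/-- Converse: if S ≥ 0, C ≥ 0 satisfy the illness-death system with migration
and N = S + C > 0, then p = C/N satisfies the prevalence PDE and 0 ≤ p ≤ 1. -/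
theorem system_to_prevalence
    (S C i r m0 m1 σ γ St Sa Ct Ca : ℝ × ℝ → ℝ)
    (hSnn : ∀ x, S x ≥ 0) (hCnn : ∀ x, C x ≥ 0)
    (hNpos : ∀ x, S x + C x > 0)
    (hSt : ∀ t a, HasDerivAt (fun s => S (s, a)) (St (t, a)) t)
    (hSa : ∀ t a, HasDerivAt (fun s => S (t, s)) (Sa (t, a)) a)
    (hCt : ∀ t a, HasDerivAt (fun s => C (s, a)) (Ct (t, a)) t)
    (hCa : ∀ t a, HasDerivAt (fun s => C (t, s)) (Ca (t, a)) a)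
    (hSsys : ∀ x, St x + Sa x
      = σ x * (S x + C x) - (i x + m0 x) * S x + r x * C x)
    (hCsys : ∀ x, Ct x + Ca x
      = γ x * (S x + C x) + i x * S x - (m1 x + r x) * C x) :
    ∀ t a : ℝ,
      (∃ pt pa : ℝ,
        HasDerivAt (fun s => C (s, a) / (S (s, a) + C (s, a))) pt t ∧
        HasDerivAt (fun s => C (t, s) / (S (t, s) + C (t, s))) pa a ∧
        pa + pt =
          (1 - C (t, a) / (S (t, a) + C (t, a)))
              * (i (t, a) - (C (t, a) / (S (t, a) + C (t, a)))
                  * (m1 (t, a) - m0 (t, a)))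
            - r (t, a) * (C (t, a) / (S (t, a) + C (t, a)))
            + (γ (t, a) * (1 - C (t, a) / (S (t, a) + C (t, a)))
                - (C (t, a) / (S (t, a) + C (t, a))) * σ (t, a))) ∧
      0 ≤ C (t, a) / (S (t, a) + C (t, a)) ∧
      C (t, a) / (S (t, a) + C (t, a)) ≤ 1 := by
  intro t a
  have hN := hNpos (t, a)
  have hNne : S (t, a) + C (t, a) ≠ 0 := ne_of_gt hN
  refine ⟨?_, div_nonneg (hCnn _) hN.le,
    div_le_one_of_le₀ (by nlinarith [hSnn (t, a)]) hN.le⟩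
  have hpt : HasDerivAt (fun s => C (s, a) / (S (s, a) + C (s, a)))
      ((Ct (t, a) * (S (t, a) + C (t, a)) - C (t, a) * (St (t, a) + Ct (t, a)))
        / (S (t, a) + C (t, a)) ^ 2) t :=
    (hCt t a).div ((hSt t a).add (hCt t a)) hNne
  have hpa : HasDerivAt (fun s => C (t, s) / (S (t, s) + C (t, s)))
      ((Ca (t, a) * (S (t, a) + C (t, a)) - C (t, a) * (Sa (t, a) + Ca (t, a)))
        / (S (t, a) + C (t, a)) ^ 2) a :=
    (hCa t a).div ((hSa t a).add (hCa t a)) hNne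
  refine ⟨_, _, hpt, hpa, ?_⟩
  have h1 := hSsys (t, a)
  have h2 := hCsys (t, a)
  field_simp
  linear_combination (S (t, a) * h2 - C (t, a) * h1)
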